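/- Let Z ⊆ {1,…,n}×{1,…,n+m} be a sparsity pattern and q ≥ 1. Define the ensemble sparsity pattern Ẑ ⊆ {1,…,qn}×{1,…,qn+m} by: for 1 ≤ i,j ≤ n and 1 ≤ p ≤ q, the position ((p−1)n+i, (p−1)n+j) belongs to Ẑ iff (i,j) ∈ Z, the position ((p−1)n+i, qn+j') belongs to Ẑ (for 1 ≤ j' ≤ m) iff (i, n+j') ∈ Z, and no other positions belong to Ẑ. Then for every k ≥ 0, Z is structurally controllable for (k,q) if and only if Ẑ is structurally controllable for (k,1). -/

import Mathlib

/-- The α-in-neighbor set `N^α_in(V')` of a set `V'` of state nodes, for the digraph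
associated with the sparsity pattern `Z`. -/
def NinA {n m : ℕ} (Z : Finset (Fin n × (Fin n ⊕ Fin m))) (V' : Finset (Fin n)) :
    Finset (Fin n) :=
  Finset.univ.filter fun j => ∃ i ∈ V', (i, Sum.inl j) ∈ Z

/-- The β-in-neighbor set `N^β_in(V')` of a set `V'` of state nodes. -/
def NinB {n m : ℕ} (Z : Finset (Fin n × (Fin n ⊕ Fin m))) (V' : Finset (Fin n)) :
    Finset (Fin m) :=
  Finset.univ.filter fun j => ∃ i ∈ V', (i, Sum.inr j) ∈ Z

/-- The edge relation of the digraph `G` associated with the sparsity pattern `Z`: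
nodes are `Sum.inl i` (state node `α_i`) and `Sum.inr j` (control node `β_j`). -/
def GEdge {n m : ℕ} (Z : Finset (Fin n × (Fin n ⊕ Fin m))) :
    (Fin n ⊕ Fin m) → (Fin n ⊕ Fin m) → Prop :=
  fun v w => ∃ i : Fin n, w = Sum.inl i ∧ (i, v) ∈ Z

/-- `[A B]` conforms to the sparsity pattern `Z`. -/
def Conforms {n m : ℕ} (Z : Finset (Fin n × (Fin n ⊕ Fin m)))
    (A : Matrix (Fin n) (Fin n) ℝ) (B : Matrix (Fin n) (Fin m) ℝ) : Prop :=
  (∀ i j, (i, Sum.inl j) ∉ Z → A i j = 0) ∧ (∀ i j, (i, Sum.inr j) ∉ Z → B i j = 0)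

/-- The block-diagonal matrix `A[ℓ] = blockdiag(A_1[ℓ],…,A_q[ℓ])`. -/
def blockDiagA {n : ℕ} (q : ℕ) (A : Fin q → Matrix (Fin n) (Fin n) ℝ) :
    Matrix (Fin q × Fin n) (Fin q × Fin n) ℝ :=
  fun x y => if x.1 = y.1 then A x.1 x.2 y.2 else 0

/-- The vertically stacked matrix `B[ℓ] = [B_1[ℓ]; …; B_q[ℓ]]`. -/
def stackB {n m : ℕ} (q : ℕ) (B : Fin q → Matrix (Fin n) (Fin m) ℝ) :
    Matrix (Fin q × Fin n) (Fin m) ℝ :=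
  fun x j => B x.1 x.2 j

/-- The k-switched linear q-ensemble determined by the matrices is controllable:
the columns of `A[ℓ]^d B[ℓ]`, over `ℓ = 0,…,k` and `d = 0,…,qn−1`, span `ℝ^{qn}`. -/
def EnsembleControllable {n m : ℕ} (k q : ℕ)
    (A : Fin (k + 1) → Fin q → Matrix (Fin n) (Fin n) ℝ)
    (B : Fin (k + 1) → Fin q → Matrix (Fin n) (Fin m) ℝ) : Prop :=
  Submodule.span ℝ
    {v : Fin q × Fin n → ℝ |
      ∃ (ℓ : Fin (k + 1)) (d : ℕ), d < q * n ∧ ∃ j : Fin m,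
        v = fun x => ((blockDiagA q (A ℓ)) ^ d * stackB q (B ℓ)) x j} = ⊤

/-- The sparsity pattern `Z` is structurally controllable for `(k, q)`. -/
def StructurallyControllable {n m : ℕ} (Z : Finset (Fin n × (Fin n ⊕ Fin m)))
    (k q : ℕ) : Prop :=
  ∃ (A : Fin (k + 1) → Fin q → Matrix (Fin n) (Fin n) ℝ)
    (B : Fin (k + 1) → Fin q → Matrix (Fin n) (Fin m) ℝ),
    (∀ ℓ p, Conforms Z (A ℓ p) (B ℓ p)) ∧ EnsembleControllable k q A B


/-- `[A B]` conforms to a sparsity pattern on `N × (N + M)` positions. -/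
def Conforms' {N M : ℕ} (Z : Finset (Fin N × (Fin N ⊕ Fin M)))
    (A : Matrix (Fin N) (Fin N) ℝ) (B : Matrix (Fin N) (Fin M) ℝ) : Prop :=
  (∀ i j, (i, Sum.inl j) ∉ Z → A i j = 0) ∧ (∀ i j, (i, Sum.inr j) ∉ Z → B i j = 0)

/-- A sparsity pattern on `N × (N + M)` positions is structurally controllable for
`(k, 1)`: there are conforming matrices `A[ℓ] ∈ ℝ^{N×N}`, `B[ℓ] ∈ ℝ^{N×M}`,
`ℓ = 0,…,k`, such that the columns of `A[ℓ]^d B[ℓ]`, over all `ℓ = 0,…,k` and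
`d = 0,…,N−1`, span `ℝ^N`. -/
def StructurallyControllableSingle {N M : ℕ}
    (Z : Finset (Fin N × (Fin N ⊕ Fin M))) (k : ℕ) : Prop :=
  ∃ (A : Fin (k + 1) → Matrix (Fin N) (Fin N) ℝ)
    (B : Fin (k + 1) → Matrix (Fin N) (Fin M) ℝ),
    (∀ ℓ, Conforms' Z (A ℓ) (B ℓ)) ∧
      Submodule.span ℝ
        {v : Fin N → ℝ |
          ∃ (ℓ : Fin (k + 1)) (d : ℕ), d < N ∧ ∃ j : Fin M,
            v = fun i => ((A ℓ) ^ d * B ℓ) i j} = ⊤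

/-- The ensemble sparsity pattern `Ẑ ⊆ {1,…,qn} × ({1,…,qn} ⊕ {1,…,m})` of `Z`:
row `a` and column `b` of the `A`-block are admissible iff they lie in the same
diagonal block (`a / n = b / n`) and `(a % n, b % n)` is admissible for `Z`;
row `a` and column `j` of the `B`-block are admissible iff `(a % n, n + j)` is
admissible for `Z`. -/
noncomputable def hatZ {n m : ℕ} (hn : 0 < n) (q : ℕ)
    (Z : Finset (Fin n × (Fin n ⊕ Fin m))) :
    Finset (Fin (q * n) × (Fin (q * n) ⊕ Fin m)) :=
  have := Classical.propDecidable
  Finset.univ.filter fun x =>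
    (∃ b : Fin (q * n), x.2 = Sum.inl b ∧ x.1.val / n = b.val / n ∧
      ((⟨x.1.val % n, Nat.mod_lt _ hn⟩ : Fin n),
        Sum.inl (⟨b.val % n, Nat.mod_lt _ hn⟩ : Fin n)) ∈ Z) ∨
    (∃ j : Fin m, x.2 = Sum.inr j ∧
      ((⟨x.1.val % n, Nat.mod_lt _ hn⟩ : Fin n), Sum.inr j) ∈ Z)

/-- The index equivalence `(p, i) ↦ p·n + i` between `Fin q × Fin n` and `Fin (q·n)`. -/
def eqv (n q : ℕ) (hn : 0 < n) : Fin q × Fin n ≃ Fin (q * n) where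
  toFun x := ⟨x.1.val * n + x.2.val, by
    calc x.1.val * n + x.2.val < x.1.val * n + n := Nat.add_lt_add_left x.2.isLt _
      _ = (x.1.val + 1) * n := (Nat.succ_mul _ _).symm
      _ ≤ q * n := Nat.mul_le_mul_right _ x.1.isLt⟩
  invFun a := (⟨a.val / n, (Nat.div_lt_iff_lt_mul hn).mpr a.isLt⟩,
    ⟨a.val % n, Nat.mod_lt _ hn⟩)
  left_inv x := by
    have h1 : (x.1.val * n + x.2.val) / n = x.1.val := by
      rw [Nat.add_comm, Nat.add_mul_div_right _ _ hn, Nat.div_eq_of_lt x.2.isLt,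
        Nat.zero_add]
    have h2 : (x.1.val * n + x.2.val) % n = x.2.val := by
      rw [Nat.add_comm, Nat.add_mul_mod_self_right, Nat.mod_eq_of_lt x.2.isLt]
    ext <;> simp [h1, h2]
  right_inv a := by
    ext
    show a.val / n * n + a.val % n = a.val
    rw [Nat.mul_comm]
    exact Nat.div_add_mod a.val n

lemma eqv_symm_apply {n q : ℕ} (hn : 0 < n) (a : Fin (q * n)) :
    (eqv n q hn).symm a = (⟨a.val / n, (Nat.div_lt_iff_lt_mul hn).mpr a.isLt⟩,
      ⟨a.val % n, Nat.mod_lt _ hn⟩) := rfl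

lemma eqv_div {n q : ℕ} (hn : 0 < n) (x : Fin q × Fin n) :
    (eqv n q hn x).val / n = x.1.val := by
  show (x.1.val * n + x.2.val) / n = x.1.val
  rw [Nat.add_comm, Nat.add_mul_div_right _ _ hn, Nat.div_eq_of_lt x.2.isLt,
    Nat.zero_add]

lemma eqv_mod {n q : ℕ} (hn : 0 < n) (x : Fin q × Fin n) :
    (eqv n q hn x).val % n = x.2.val := by
  show (x.1.val * n + x.2.val) % n = x.2.val
  rw [Nat.add_comm, Nat.add_mul_mod_self_right, Nat.mod_eq_of_lt x.2.isLt]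

lemma mem_hatZ_inl {n m : ℕ} (hn : 0 < n) (q : ℕ)
    (Z : Finset (Fin n × (Fin n ⊕ Fin m))) (a b : Fin (q * n)) :
    (a, Sum.inl b) ∈ hatZ hn q Z ↔ a.val / n = b.val / n ∧
      ((⟨a.val % n, Nat.mod_lt _ hn⟩ : Fin n),
        Sum.inl (⟨b.val % n, Nat.mod_lt _ hn⟩ : Fin n)) ∈ Z := by
  simp [hatZ, Finset.mem_filter]

lemma mem_hatZ_inr {n m : ℕ} (hn : 0 < n) (q : ℕ)
    (Z : Finset (Fin n × (Fin n ⊕ Fin m))) (a : Fin (q * n)) (j : Fin m) :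
    (a, Sum.inr j) ∈ hatZ hn q Z ↔
      ((⟨a.val % n, Nat.mod_lt _ hn⟩ : Fin n), Sum.inr j) ∈ Z := by
  simp [hatZ, Finset.mem_filter]

/-- Transfer of the controllability span condition along the index equivalence. -/
lemma key {n m q : ℕ} (hn : 0 < n) (k : ℕ)
    (A : Fin (k + 1) → Fin q → Matrix (Fin n) (Fin n) ℝ)
    (B : Fin (k + 1) → Fin q → Matrix (Fin n) (Fin m) ℝ)
    (Ah : Fin (k + 1) → Matrix (Fin (q * n)) (Fin (q * n)) ℝ)
    (Bh : Fin (k + 1) → Matrix (Fin (q * n)) (Fin m) ℝ)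
    (hA : ∀ ℓ, Ah ℓ = (Matrix.reindex (eqv n q hn) (eqv n q hn)) (blockDiagA q (A ℓ)))
    (hB : ∀ ℓ a j, Bh ℓ a j = stackB q (B ℓ) ((eqv n q hn).symm a) j) :
    EnsembleControllable k q A B ↔
      Submodule.span ℝ
        {v : Fin (q * n) → ℝ | ∃ (ℓ : Fin (k + 1)) (d : ℕ), d < q * n ∧ ∃ j : Fin m,
          v = fun a => ((Ah ℓ) ^ d * Bh ℓ) a j} = ⊤ := by
  classical
  set e := eqv n q hn
  have hpow : ∀ ℓ d, (Ah ℓ) ^ d =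
      (Matrix.reindex e e) ((blockDiagA q (A ℓ)) ^ d) := by
    intro ℓ d
    rw [hA ℓ]
    have := map_pow (Matrix.reindexAlgEquiv ℝ ℝ e) (blockDiagA q (A ℓ)) d
    simpa [Matrix.reindexAlgEquiv_apply] using this.symm
  have hentry : ∀ ℓ d (a : Fin (q * n)) (j : Fin m),
      ((Ah ℓ) ^ d * Bh ℓ : Matrix (Fin (q * n)) (Fin m) ℝ) a j =
        ((blockDiagA q (A ℓ)) ^ d * stackB q (B ℓ) :
          Matrix (Fin q × Fin n) (Fin m) ℝ) (e.symm a) j := by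
    intro ℓ d a j
    rw [hpow]
    simp only [Matrix.mul_apply, Matrix.reindex_apply, Matrix.submatrix_apply]
    refine Fintype.sum_equiv e.symm _ _ ?_
    intro b
    rw [hB]
  set φ : (Fin q × Fin n → ℝ) ≃ₗ[ℝ] (Fin (q * n) → ℝ) :=
    LinearEquiv.funCongrLeft ℝ ℝ e.symm
  have hφ : ∀ (v : Fin q × Fin n → ℝ), φ v = fun a => v (e.symm a) := fun _ => rfl
  have himg : {v : Fin (q * n) → ℝ | ∃ (ℓ : Fin (k + 1)) (d : ℕ), d < q * n ∧ ∃ j : Fin m,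
      v = fun a => ((Ah ℓ) ^ d * Bh ℓ) a j} =
      φ '' {v : Fin q × Fin n → ℝ | ∃ (ℓ : Fin (k + 1)) (d : ℕ), d < q * n ∧ ∃ j : Fin m,
        v = fun x => ((blockDiagA q (A ℓ)) ^ d * stackB q (B ℓ)) x j} := by
    ext v
    constructor
    · rintro ⟨ℓ, d, hd, j, rfl⟩
      exact ⟨_, ⟨ℓ, d, hd, j, rfl⟩, by
        funext a
        rw [hφ, hentry]⟩
    · rintro ⟨w, ⟨ℓ, d, hd, j, rfl⟩, rfl⟩
      exact ⟨ℓ, d, hd, j, by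
        funext a
        rw [hφ, hentry]⟩
  rw [EnsembleControllable, himg]
  erw [← Submodule.map_span]
  constructor
  · intro h; rw [h, Submodule.map_top, LinearMap.range_eq_top]
    exact φ.surjective
  · intro h
    have htop : Submodule.map (φ : (Fin q × Fin n → ℝ) →ₗ[ℝ] (Fin (q * n) → ℝ)) ⊤ = ⊤ := by
      rw [Submodule.map_top, LinearMap.range_eq_top]; exact φ.surjective
    exact Submodule.map_injective_of_injective φ.injective (h.trans htop.symm)

/-- `Z` is structurally controllable for `(k, q)` iff the ensemble
sparsity pattern `Ẑ` is structurally controllable for `(k, 1)`. -/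
theorem stmt12 {n m : ℕ} (hn : 0 < n) (hm : 0 < m)
    (Z : Finset (Fin n × (Fin n ⊕ Fin m))) (q : ℕ) (hq : 1 ≤ q) (k : ℕ) :
    StructurallyControllable Z k q ↔
      StructurallyControllableSingle (hatZ hn q Z) k := by
  classical
  set e := eqv n q hn with he
  constructor
  · rintro ⟨A, B, hconf, hctrl⟩
    refine ⟨fun ℓ => (Matrix.reindex e e) (blockDiagA q (A ℓ)),
      fun ℓ => fun a j => stackB q (B ℓ) (e.symm a) j, ?_, ?_⟩
    · intro ℓ
      constructor
      · intro a b hab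
        rw [mem_hatZ_inl hn q Z a b] at hab
        show blockDiagA q (A ℓ) (e.symm a) (e.symm b) = 0
        unfold blockDiagA
        by_cases hblk : (e.symm a).1 = (e.symm b).1
        · rw [if_pos hblk]
          exact (hconf ℓ _).1 _ _ fun hZ => hab ⟨congrArg Fin.val hblk, hZ⟩
        · rw [if_neg hblk]
      · intro a j haj
        rw [mem_hatZ_inr hn q Z a j] at haj
        exact (hconf ℓ _).2 _ _ haj
    · exact (key hn k A B _ _ (fun ℓ => rfl) (fun ℓ a j => rfl)).mp hctrl
  · rintro ⟨Ah, Bh, hconf, hctrl⟩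
    set A : Fin (k + 1) → Fin q → Matrix (Fin n) (Fin n) ℝ :=
      fun ℓ p => fun i j => Ah ℓ (e (p, i)) (e (p, j)) with hAdef
    set B : Fin (k + 1) → Fin q → Matrix (Fin n) (Fin m) ℝ :=
      fun ℓ p => fun i j => Bh ℓ (e (p, i)) j with hBdef
    have hfix : ∀ (p : Fin q) (i : Fin n),
        (e (p, i)).val / n = p.val ∧ (e (p, i)).val % n = i.val :=
      fun p i => ⟨eqv_div hn (p, i), eqv_mod hn (p, i)⟩
    refine ⟨A, B, ?_, ?_⟩
    · intro ℓ p
      constructor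
      · intro i j hij
        refine (hconf ℓ).1 (e (p, i)) (e (p, j)) fun hmem => ?_
        rw [mem_hatZ_inl hn q Z] at hmem
        obtain ⟨_, hZ⟩ := hmem
        have h1 : (⟨(e (p, i)).val % n, Nat.mod_lt _ hn⟩ : Fin n) = i := by
          ext; exact (hfix p i).2
        have h2 : (⟨(e (p, j)).val % n, Nat.mod_lt _ hn⟩ : Fin n) = j := by
          ext; exact (hfix p j).2
        rw [h1, h2] at hZ
        exact hij hZ
      · intro i j hij
        refine (hconf ℓ).2 (e (p, i)) j fun hmem => ?_
        rw [mem_hatZ_inr hn q Z] at hmem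
        have h1 : (⟨(e (p, i)).val % n, Nat.mod_lt _ hn⟩ : Fin n) = i := by
          ext; exact (hfix p i).2
        rw [h1] at hmem
        exact hij hmem
    · refine (key hn k A B Ah Bh ?_ ?_).mpr hctrl
      · intro ℓ
        funext a b
        show Ah ℓ a b = blockDiagA q (A ℓ) (e.symm a) (e.symm b)
        unfold blockDiagA
        by_cases hblk : (e.symm a).1 = (e.symm b).1
        · rw [if_pos hblk]
          show Ah ℓ a b =
            Ah ℓ (e ((e.symm a).1, (e.symm a).2)) (e ((e.symm a).1, (e.symm b).2))
          have h1 : e ((e.symm a).1, (e.symm a).2) = a := e.apply_symm_apply a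
          have h2 : e ((e.symm a).1, (e.symm b).2) = b := by
            rw [hblk]; exact e.apply_symm_apply b
          rw [h1, h2]
        · rw [if_neg hblk]
          refine (hconf ℓ).1 a b fun hmem => ?_
          rw [mem_hatZ_inl hn q Z] at hmem
          exact hblk (Fin.ext hmem.1)
      · intro ℓ a j
        show Bh ℓ a j = Bh ℓ (e ((e.symm a).1, (e.symm a).2)) j
        rw [show e ((e.symm a).1, (e.symm a).2) = a from e.apply_symm_apply a]
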